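/- Let μ be a probability measure on ℝ with density proportional to t^{n+q−1} on [ξ, ξ+D] (for fixed D > 0, ξ ≥ 0, n+q > 1). Then for every v ∈ [0,1], the half-line isoperimetric profile satisfies I♭(t^{n+q−1}, [ξ,ξ+D])(v) = ((n+q)/D') · (min(v,1−v)(ζ+1)^{n+q} + max(v,1−v) ζ^{n+q})^{(n+q−1)/(n+q)} / ((ζ+1)^{n+q} − ζ^{n+q}), where ζ = ξ/D and D' = D. In particular, inf over ξ ≥ 0 of I♭(t^{n+q−1},[ξ,ξ+D])(v) equals ((n+q)/D) inf_{ζ ≥ 0} (min(v,1−v)(ζ+1)^{n+q} + max(v,1−v)ζ^{n+q})^{(n+q−1)/(n+q)} / ((ζ+1)^{n+q} − ζ^{n+q}). -/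

import Mathlib

open scoped Classical
open MeasureTheory

/-- Half-line isoperimetric profile `I♭(f,[a,b])(v)`: the infimum of the (normalized)
boundary densities of half-lines `(−∞,x]` or `[x,∞)` carrying mass `v` of the probability
measure with density proportional to `f` on `[a,b]`. -/
noncomputable def Iflat (f : ℝ → ℝ) (a b v : ℝ) : ℝ :=
  sInf { y : ℝ | ∃ x ∈ Set.Icc a b,
    ((∫ s in a..x, f s) = v * ∫ s in a..b, f s ∨
     (∫ s in x..b, f s) = v * ∫ s in a..b, f s) ∧
    y = f x / ∫ s in a..b, f s }

/-- A nonnegative function is log-concave if `−log f` is convex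
(equivalently, the multiplicative inequality below). -/
def LogConcaveFn (f : ℝ → ℝ) : Prop :=
  (∀ x, 0 ≤ f x) ∧ ∀ x y : ℝ, ∀ t ∈ Set.Icc (0:ℝ) 1,
    f x ^ t * f y ^ (1 - t) ≤ f (t * x + (1 - t) * y)

lemma Iflat_rpow (p a b : ℝ) (hp : 1 < p) (ha : 0 ≤ a) (hab : a < b) (v : ℝ)
    (hv : v ∈ Set.Icc (0:ℝ) 1) :
    Iflat (fun t => t ^ (p - 1)) a b v =
      (a ^ p + min v (1 - v) * (b ^ p - a ^ p)) ^ ((p - 1) / p) / ((b ^ p - a ^ p) / p) := by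
  have hp0 : (0:ℝ) < p := by linarith
  have hb : 0 ≤ b := le_trans ha hab.le
  have hΔ : 0 < b ^ p - a ^ p := by
    have := Real.rpow_lt_rpow ha hab hp0
    linarith
  have hcont : Continuous fun s : ℝ => s ^ (p - 1) := by
    rw [continuous_iff_continuousAt]
    intro x
    exact Real.continuousAt_rpow_const x (p-1) (Or.inr (by linarith))
  have hF : ∀ x : ℝ, (∫ s in a..x, s ^ (p - 1)) = (x ^ p - a ^ p) / p := by
    intro x
    rw [integral_rpow (Or.inl (by linarith))]
    ring_nf
  have hT : (∫ s in a..b, (fun t => t ^ (p-1)) s) = (b ^ p - a ^ p) / p := hF b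
  have hTpos : 0 < (b ^ p - a ^ p) / p := div_pos hΔ hp0
  set X : ℝ → ℝ := fun m => (a ^ p + m * (b ^ p - a ^ p)) ^ (1/p) with hXdef
  have hbase : ∀ m : ℝ, 0 ≤ m → 0 ≤ a ^ p + m * (b ^ p - a ^ p) := fun m hm =>
    add_nonneg (Real.rpow_nonneg ha p) (mul_nonneg hm hΔ.le)
  have hXp : ∀ m : ℝ, 0 ≤ m → (X m) ^ p = a ^ p + m * (b ^ p - a ^ p) := by
    intro m hm
    rw [hXdef]
    simp only [one_div]
    exact Real.rpow_inv_rpow (hbase m hm) hp0.ne'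
  have hXmem : ∀ m : ℝ, 0 ≤ m → m ≤ 1 → X m ∈ Set.Icc a b := by
    intro m hm0 hm1
    constructor
    · have h1 : a = (a ^ p) ^ (1/p) := by
        rw [one_div, Real.rpow_rpow_inv ha hp0.ne']
      rw [h1, hXdef]
      apply Real.rpow_le_rpow (Real.rpow_nonneg ha p) _ (by positivity)
      nlinarith
    · have h1 : b = (b ^ p) ^ (1/p) := by
        rw [one_div, Real.rpow_rpow_inv hb hp0.ne']
      rw [h1, hXdef]
      apply Real.rpow_le_rpow (hbase m hm0) _ (by positivity)
      nlinarith
  -- set description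
  have hset : { y : ℝ | ∃ x ∈ Set.Icc a b,
      ((∫ s in a..x, (fun t => t ^ (p-1)) s) = v * ∫ s in a..b, (fun t => t ^ (p-1)) s ∨
       (∫ s in x..b, (fun t => t ^ (p-1)) s) = v * ∫ s in a..b, (fun t => t ^ (p-1)) s) ∧
      y = (fun t => t ^ (p-1)) x / ∫ s in a..b, (fun t => t ^ (p-1)) s }
      = {(X v) ^ (p-1) / ((b ^ p - a ^ p)/p), (X (1-v)) ^ (p-1) / ((b ^ p - a ^ p)/p)} := by
    have hvb : ∀ x : ℝ, x ∈ Set.Icc a b →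
        (∫ s in x..b, (fun t => t ^ (p-1)) s) = ((b^p - a^p)/p) - (x ^ p - a ^ p)/p := by
      intro x hx
      have h2 : (∫ s in a..x, (fun t => t ^ (p-1)) s) + (∫ s in x..b, (fun t => t ^ (p-1)) s)
          = ∫ s in a..b, (fun t => t ^ (p-1)) s :=
        intervalIntegral.integral_add_adjacent_intervals
          (hcont.intervalIntegrable a x) (hcont.intervalIntegrable x b)
      have h3 := hF x
      rw [hT] at h2
      simp only at h2 h3 ⊢
      rw [h3] at h2
      linarith
    have huniq : ∀ x : ℝ, x ∈ Set.Icc a b → ∀ m : ℝ, 0 ≤ m →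
        (x ^ p - a ^ p) / p = m * ((b ^ p - a ^ p)/p) → x = X m := by
      intro x hx m hm hxm
      have hxp : x ^ p = a ^ p + m * (b ^ p - a ^ p) := by
        field_simp at hxm
        linarith
      have h0x : 0 ≤ x := le_trans ha hx.1
      rw [hXdef]
      simp only [one_div]
      rw [← hxp, Real.rpow_rpow_inv h0x hp0.ne']
    ext y
    simp only [Set.mem_setOf_eq, Set.mem_insert_iff, Set.mem_singleton_iff]
    constructor
    · rintro ⟨x, hx, hcond, hy⟩
      rcases hcond with h | h
      · left
        rw [hF x, hT] at h
        rw [hy, hT, huniq x hx v hv.1 h]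
      · right
        rw [hvb x hx, hT] at h
        have h4 : (x ^ p - a ^ p) / p = (1 - v) * ((b ^ p - a ^ p)/p) := by linarith
        rw [hy, hT, huniq x hx (1-v) (by linarith [hv.2]) h4]
    · rintro (h | h)
      · refine ⟨X v, hXmem v hv.1 hv.2, Or.inl ?_, by rw [h, hT]⟩
        rw [hF, hT, hXp v hv.1]
        ring
      · refine ⟨X (1-v), hXmem (1-v) (by linarith [hv.2]) (by linarith [hv.1]), Or.inr ?_,
          by rw [h, hT]⟩
        rw [hvb _ (hXmem (1-v) (by linarith [hv.2]) (by linarith [hv.1])), hT,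
          hXp (1-v) (by linarith [hv.2])]
        ring
  have hXval : ∀ m : ℝ, 0 ≤ m → (X m) ^ (p-1) = (a ^ p + m * (b ^ p - a ^ p)) ^ ((p-1)/p) := by
    intro m hm
    rw [hXdef]
    simp only
    rw [← Real.rpow_mul (hbase m hm)]
    norm_num
    rw [show p⁻¹ * (p-1) = (p-1)/p by ring]
  rw [Iflat, hset, csInf_pair, hXval v hv.1, hXval (1-v) (by linarith [hv.2])]
  have he : 0 ≤ (p-1)/p := div_nonneg (by linarith) hp0.le
  rcases le_total v (1-v) with hle | hle
  · rw [min_eq_left hle, min_eq_left]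
    exact (div_le_div_iff_of_pos_right hTpos).mpr
      (Real.rpow_le_rpow (hbase v hv.1) (by nlinarith) he)
  · rw [min_eq_right hle, min_eq_right]
    exact (div_le_div_iff_of_pos_right hTpos).mpr
      (Real.rpow_le_rpow (hbase (1-v) (by linarith [hv.2])) (by nlinarith) he)

lemma part1 (p D ξ : ℝ) (hp : 1 < p) (hD : 0 < D) (hξ : 0 ≤ ξ) (v : ℝ)
    (hv : v ∈ Set.Icc (0:ℝ) 1) :
    Iflat (fun t => t ^ (p - 1)) ξ (ξ + D) v =
      (p / D) * (min v (1 - v) * (ξ / D + 1) ^ p + max v (1 - v) * (ξ / D) ^ p) ^ ((p - 1) / p)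
        / ((ξ / D + 1) ^ p - (ξ / D) ^ p) := by
  have hp0 : (0:ℝ) < p := by linarith
  rw [Iflat_rpow p ξ (ξ + D) hp hξ (by linarith) v hv]
  set m := min v (1-v) with hm
  set M := max v (1-v) with hMdef
  have hm0 : 0 ≤ m := le_min hv.1 (by linarith [hv.2])
  have hM0 : 0 ≤ M := le_trans hm0 (min_le_max)
  have hmM : m + M = 1 := by
    rw [hm, hMdef, min_add_max]; ring
  have hζ0 : 0 ≤ ξ / D := div_nonneg hξ hD.le
  have h1 : ξ ^ p = D ^ p * (ξ / D) ^ p := by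
    rw [← Real.mul_rpow hD.le hζ0]
    congr 1
    field_simp
  have h2 : (ξ + D) ^ p = D ^ p * (ξ / D + 1) ^ p := by
    rw [← Real.mul_rpow hD.le (by linarith)]
    congr 1
    field_simp
  have hdd : 0 < (ξ / D + 1) ^ p - (ξ / D) ^ p := by
    have := Real.rpow_lt_rpow hζ0 (by linarith : ξ/D < ξ/D + 1) hp0
    linarith
  have hDp : 0 < D ^ p := Real.rpow_pos_of_pos hD p
  have hY : 0 ≤ m * (ξ / D + 1) ^ p + M * (ξ / D) ^ p := by
    have := Real.rpow_nonneg hζ0 p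
    have := Real.rpow_nonneg (by linarith : (0:ℝ) ≤ ξ/D + 1) p
    nlinarith
  have hnum : ξ ^ p + m * ((ξ + D) ^ p - ξ ^ p)
      = D ^ p * (m * (ξ / D + 1) ^ p + M * (ξ / D) ^ p) := by
    rw [h1, h2]
    have hM1 : M = 1 - m := by linarith
    rw [hM1]; ring
  have hpow : (D ^ p * (m * (ξ / D + 1) ^ p + M * (ξ / D) ^ p)) ^ ((p-1)/p)
      = D ^ (p-1) * (m * (ξ / D + 1) ^ p + M * (ξ / D) ^ p) ^ ((p-1)/p) := by
    rw [Real.mul_rpow hDp.le hY, ← Real.rpow_mul hD.le]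
    congr 2
    field_simp
  rw [hnum, hpow, h1, h2]
  have hD1 : D ^ (p-1) = D ^ p / D := by
    rw [Real.rpow_sub hD, Real.rpow_one]
  rw [hD1]
  have hrest : D ^ p * (ξ / D + 1) ^ p - D ^ p * (ξ / D) ^ p
      = D ^ p * ((ξ / D + 1) ^ p - (ξ / D) ^ p) := by ring
  rw [hrest]
  set E := (m * (ξ / D + 1) ^ p + M * (ξ / D) ^ p) ^ ((p - 1) / p) with hE
  set dd := (ξ / D + 1) ^ p - (ξ / D) ^ p with hdd2
  rw [div_eq_div_iff (by positivity : (0:ℝ) < D ^ p * dd / p).ne' hdd.ne']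
  field_simp


/-- explicit formula for the half-line profile of the density `t^{p−1}`
(`p = n+q > 1`) on `[ξ,ξ+D]`, and the resulting formula for the infimum over `ξ ≥ 0`. -/
theorem stmt7 (p D ξ : ℝ) (hp : 1 < p) (hD : 0 < D) (hξ : 0 ≤ ξ) (v : ℝ)
    (hv : v ∈ Set.Icc (0:ℝ) 1) :
    Iflat (fun t => t ^ (p - 1)) ξ (ξ + D) v =
      (p / D) * (min v (1 - v) * (ξ / D + 1) ^ p + max v (1 - v) * (ξ / D) ^ p) ^ ((p - 1) / p)
        / ((ξ / D + 1) ^ p - (ξ / D) ^ p) ∧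
    (⨅ ζ : Set.Ici (0:ℝ), Iflat (fun t => t ^ (p - 1)) (ζ:ℝ) ((ζ:ℝ) + D) v) =
      (p / D) * ⨅ ζ : Set.Ici (0:ℝ),
        (min v (1 - v) * ((ζ:ℝ) + 1) ^ p + max v (1 - v) * (ζ:ℝ) ^ p) ^ ((p - 1) / p)
          / (((ζ:ℝ) + 1) ^ p - (ζ:ℝ) ^ p) := by
  refine ⟨part1 p D ξ hp hD hξ v hv, ?_⟩
  set G : ℝ → ℝ := fun z =>
    (min v (1 - v) * (z + 1) ^ p + max v (1 - v) * z ^ p) ^ ((p - 1) / p)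
      / ((z + 1) ^ p - z ^ p) with hG
  have hstep1 : (⨅ ζ : Set.Ici (0:ℝ), Iflat (fun t => t ^ (p - 1)) (ζ:ℝ) ((ζ:ℝ) + D) v)
      = ⨅ ζ : Set.Ici (0:ℝ), (p / D) * G ((ζ:ℝ) / D) :=
    iInf_congr fun ζ => by
      rw [part1 p D ζ hp hD ζ.2 v hv, hG, mul_div_assoc]
  rw [hstep1]
  have hφ : Function.Surjective
      (fun x : Set.Ici (0:ℝ) => (⟨(x:ℝ)/D, Set.mem_Ici.mpr (div_nonneg x.2 hD.le)⟩ : Set.Ici (0:ℝ))) := by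
    intro z
    refine ⟨⟨(z:ℝ)*D, Set.mem_Ici.mpr (mul_nonneg z.2 hD.le)⟩, ?_⟩
    ext
    field_simp
  have hstep2 : (⨅ ζ : Set.Ici (0:ℝ), (p / D) * G ((ζ:ℝ) / D))
      = ⨅ ζ : Set.Ici (0:ℝ), (p / D) * G (ζ:ℝ) :=
    hφ.iInf_comp (fun z : Set.Ici (0:ℝ) => (p / D) * G (z:ℝ))
  rw [hstep2, ← Real.mul_iInf_of_nonneg (by positivity)]
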